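/- arXiv:0903.0888 — 2 statements merged into one kernel-verified Lean document; each statement's English description precedes it below -/
import Mathlib

section
/- Fix a positive integer i and define f(x, y) = |ψ^(i)(x)| + |ψ^(i)(y)| − |ψ^(i)(xy)| for x, y > 0. For each fixed y > 1, the function x ↦ f(x, y) is strictly decreasing on (0, ∞); for each fixed y ∈ (0, 1), the function x ↦ f(x, y) is strictly increasing on (0, ∞). -/
noncomputable def digamma : ℝ → ℝ := deriv (fun x => Real.log (Real.Gamma x))

noncomputable def polygamma (i : ℕ) : ℝ → ℝ := iteratedDeriv i digamma

open Filter Set Topology Finset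

namespace PGaux

/-- The basic series `∑ 1/(x+n)^m`. -/
noncomputable def S (m : ℕ) (x : ℝ) : ℝ := ∑' n : ℕ, ((x + n) ^ m)⁻¹

lemma summable_aux {x : ℝ} (hx : 0 < x) {m : ℕ} (hm : 2 ≤ m) :
    Summable (fun n : ℕ => ((x + n) ^ m)⁻¹) := by
  rw [← summable_nat_add_iff 1]
  have hbase : Summable (fun n : ℕ => (((n : ℝ) + 1) ^ 2)⁻¹) := by
    have h0 : Summable (fun n : ℕ => (1 : ℝ) / (n : ℝ) ^ 2) :=
      Real.summable_one_div_nat_pow.2 one_lt_two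
    have h1 := (summable_nat_add_iff 1).2 h0
    apply h1.congr
    intro n
    push_cast
    rw [one_div]
  apply hbase.of_nonneg_of_le (fun n => by positivity)
  intro n
  have h1 : (0 : ℝ) < (n : ℝ) + 1 := by positivity
  have h2 : ((n : ℝ) + 1) ^ 2 ≤ (x + (n + 1 : ℕ)) ^ m := by
    calc ((n : ℝ) + 1) ^ 2 ≤ ((n : ℝ) + 1) ^ m := by
          apply pow_le_pow_right₀ (by linarith) hm
      _ ≤ (x + (n + 1 : ℕ)) ^ m := by
          apply pow_le_pow_left₀ (by positivity)
          push_cast; linarith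
  exact inv_anti₀ (by positivity) h2

lemma S_pos {m : ℕ} (hm : 2 ≤ m) {x : ℝ} (hx : 0 < x) : 0 < S m x := by
  apply Summable.tsum_pos (summable_aux hx hm) (fun n => by positivity) 0
  have : (0:ℝ) < x + (0:ℕ) := by simpa using hx
  positivity

lemma pow_gap {a : ℝ} (ha : 0 < a) {k : ℕ} (hk : 1 ≤ k) :
    (k : ℝ) * (((a + 1)) ^ (k + 1))⁻¹ ≤ (a ^ k)⁻¹ - ((a + 1) ^ k)⁻¹ ∧
      (a ^ k)⁻¹ - ((a + 1) ^ k)⁻¹ ≤ (k : ℝ) * (a ^ (k + 1))⁻¹ := by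
  obtain ⟨j, rfl⟩ : ∃ j, k = j + 1 := ⟨k - 1, by omega⟩
  set b : ℝ := a + 1 with hb
  have hbpos : 0 < b := by dsimp [b]; linarith
  have hab : a ≤ b := by dsimp [b]; linarith
  have hgap : ((j : ℝ) + 1) * a ^ j ≤ b ^ (j + 1) - a ^ (j + 1) ∧
      b ^ (j + 1) - a ^ (j + 1) ≤ ((j : ℝ) + 1) * b ^ j := by
    have hid := geom_sum₂_mul b a (j + 1)
    have hba : b - a = 1 := by dsimp [b]; ring
    rw [hba, mul_one] at hid
    constructor
    · rw [← hid]
      calc ((j : ℝ) + 1) * a ^ j = ∑ _i ∈ Finset.range (j + 1), a ^ j := by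
            simp [Finset.sum_const]
        _ ≤ ∑ i ∈ Finset.range (j + 1), b ^ i * a ^ (j + 1 - 1 - i) := by
            apply Finset.sum_le_sum
            intro i hi
            simp only [Finset.mem_range] at hi
            have hij : i ≤ j := by omega
            have : a ^ j = a ^ i * a ^ (j - i) := by
              rw [← pow_add]; congr 1; omega
            rw [this]
            have : j + 1 - 1 - i = j - i := by omega
            rw [this]
            gcongr
    · rw [← hid]
      calc ∑ i ∈ Finset.range (j + 1), b ^ i * a ^ (j + 1 - 1 - i)
          ≤ ∑ _i ∈ Finset.range (j + 1), b ^ j := by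
            apply Finset.sum_le_sum
            intro i hi
            simp only [Finset.mem_range] at hi
            have hij : i ≤ j := by omega
            have h1 : j + 1 - 1 - i = j - i := by omega
            rw [h1]
            calc b ^ i * a ^ (j - i) ≤ b ^ i * b ^ (j - i) := by
                  gcongr
              _ = b ^ j := by rw [← pow_add]; congr 1; omega
        _ = ((j : ℝ) + 1) * b ^ j := by
            simp [Finset.sum_const]
  have hak : (0:ℝ) < a ^ (j + 1) := by positivity
  have hbk : (0:ℝ) < b ^ (j + 1) := by positivity
  have heq : (a ^ (j + 1))⁻¹ - (b ^ (j + 1))⁻¹ =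
      (b ^ (j + 1) - a ^ (j + 1)) / (a ^ (j + 1) * b ^ (j + 1)) := by
    field_simp
  constructor
  · rw [heq]
    rw [show ((j + 1 : ℕ) : ℝ) * (b ^ (j + 1 + 1))⁻¹ = ((j:ℝ)+1) / b ^ (j + 2) by
      push_cast; rw [div_eq_mul_inv]]
    rw [div_le_div_iff₀ (by positivity) (by positivity)]
    have h1 : ((j:ℝ)+1) * a ^ j ≤ b ^ (j+1) - a ^ (j+1) := hgap.1
    calc ((j:ℝ)+1) * (a ^ (j+1) * b ^ (j+1))
        = (((j:ℝ)+1) * a ^ j) * (a * b ^ (j+1)) := by ring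
      _ ≤ (b ^ (j+1) - a ^ (j+1)) * (a * b ^ (j+1)) := by
          apply mul_le_mul_of_nonneg_right h1 (by positivity)
      _ ≤ (b ^ (j+1) - a ^ (j+1)) * (b * b ^ (j+1)) := by
          have hd : 0 ≤ b ^ (j+1) - a ^ (j+1) := by
            have := hgap.1
            nlinarith [pow_nonneg ha.le j]
          apply mul_le_mul_of_nonneg_left _ hd
          apply mul_le_mul_of_nonneg_right hab (by positivity)
      _ = (b ^ (j+1) - a ^ (j+1)) * b ^ (j+2) := by ring
  · rw [heq]
    rw [show ((j + 1 : ℕ) : ℝ) * (a ^ (j + 1 + 1))⁻¹ = ((j:ℝ)+1) / a ^ (j + 2) by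
      push_cast; rw [div_eq_mul_inv]]
    rw [div_le_div_iff₀ (by positivity) (by positivity)]
    have h1 : b ^ (j+1) - a ^ (j+1) ≤ ((j:ℝ)+1) * b ^ j := hgap.2
    calc (b ^ (j+1) - a ^ (j+1)) * a ^ (j+2)
        ≤ (((j:ℝ)+1) * b ^ j) * a ^ (j+2) := by
          apply mul_le_mul_of_nonneg_right h1 (by positivity)
      _ = (((j:ℝ)+1) * (a * b ^ j)) * a ^ (j+1) := by ring
      _ ≤ (((j:ℝ)+1) * (b * b ^ j)) * a ^ (j+1) := by
          gcongr
      _ = ((j:ℝ)+1) * (a ^ (j+1) * b ^ (j+1)) := by ring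

lemma telescope {x : ℝ} (hx : 0 < x) {k : ℕ} (hk : 1 ≤ k) :
    Summable (fun n : ℕ => ((x + n) ^ k)⁻¹ - ((x + (n + 1 : ℕ)) ^ k)⁻¹) ∧
      ∑' n : ℕ, (((x + n) ^ k)⁻¹ - ((x + (n + 1 : ℕ)) ^ k)⁻¹) = (x ^ k)⁻¹ := by
  set g : ℕ → ℝ := fun n => ((x + n) ^ k)⁻¹ with hg
  have hpos : ∀ n : ℕ, (0:ℝ) < x + n := fun n => by positivity
  have hnonneg : ∀ n : ℕ, 0 ≤ g n - g (n + 1) := by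
    intro n
    have h1 : g (n + 1) ≤ g n := by
      dsimp [g]
      gcongr
      omega
    linarith
  have hgnonneg : ∀ n : ℕ, 0 ≤ g n := fun n => by dsimp [g]; positivity
  have hsum : ∀ N : ℕ, ∑ n ∈ Finset.range N, (g n - g (n + 1)) = g 0 - g N :=
    fun N => Finset.sum_range_sub' g N
  have hS : Summable (fun n : ℕ => g n - g (n + 1)) := by
    apply summable_of_sum_range_le hnonneg (c := g 0)
    intro n
    rw [hsum n]
    linarith [hgnonneg n]
  have hg0 : Tendsto g atTop (nhds 0) := by
    have h1 : Tendsto (fun n : ℕ => x + (n : ℝ)) atTop atTop :=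
      tendsto_atTop_add_const_left _ x tendsto_natCast_atTop_atTop
    have h2 : Tendsto (fun n : ℕ => (x + (n : ℝ)) ^ k) atTop atTop :=
      (tendsto_pow_atTop (by omega)).comp h1
    exact h2.inv_tendsto_atTop
  have hlim : Tendsto (fun N : ℕ => ∑ n ∈ Finset.range N, (g n - g (n + 1))) atTop
      (nhds (g 0)) := by
    have : Tendsto (fun N : ℕ => g 0 - g N) atTop (nhds (g 0 - 0)) :=
      tendsto_const_nhds.sub hg0
    rw [sub_zero] at this
    exact this.congr (fun N => (hsum N).symm)
  have := tendsto_nhds_unique hS.hasSum.tendsto_sum_nat hlim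
  have hg00 : g 0 = (x ^ k)⁻¹ := by dsimp [g]; norm_num
  exact ⟨hS, by rw [this, hg00]⟩

lemma tail_le {x : ℝ} (hx : 0 < x) {k : ℕ} (hk : 1 ≤ k) :
    ∑' n : ℕ, ((x + n + 1) ^ (k + 1))⁻¹ ≤ (x ^ k)⁻¹ / k := by
  have hkpos : (0:ℝ) < k := by exact_mod_cast hk
  rw [le_div_iff₀ hkpos, mul_comm]
  have hsummul : Summable (fun n : ℕ => (k:ℝ) * ((x + n + 1) ^ (k + 1))⁻¹) := by
    apply Summable.mul_left
    have h := summable_aux (x := x + 1) (by linarith) (m := k + 1) (by omega)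
    apply h.congr
    intro n
    ring_nf
  have htel := telescope hx hk
  have hle : ∀ n : ℕ, (k:ℝ) * ((x + n + 1) ^ (k + 1))⁻¹ ≤
      ((x + n) ^ k)⁻¹ - ((x + (n + 1 : ℕ)) ^ k)⁻¹ := by
    intro n
    have := (pow_gap (a := x + n) (by positivity) hk).1
    push_cast
    convert this using 3 <;> push_cast <;> ring
  calc (k:ℝ) * ∑' n : ℕ, ((x + n + 1) ^ (k + 1))⁻¹
      = ∑' n : ℕ, (k:ℝ) * ((x + n + 1) ^ (k + 1))⁻¹ := by rw [tsum_mul_left]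
    _ ≤ ∑' n : ℕ, (((x + n) ^ k)⁻¹ - ((x + (n + 1 : ℕ)) ^ k)⁻¹) :=
        Summable.tsum_le_tsum hle hsummul htel.1
    _ = (x ^ k)⁻¹ := htel.2

lemma le_S {x : ℝ} (hx : 0 < x) {k : ℕ} (hk : 1 ≤ k) :
    (x ^ k)⁻¹ / k ≤ S (k + 1) x := by
  have hkpos : (0:ℝ) < k := by exact_mod_cast hk
  rw [div_le_iff₀ hkpos, mul_comm]
  have htel := telescope hx hk
  have hsummul : Summable (fun n : ℕ => (k:ℝ) * ((x + n) ^ (k + 1))⁻¹) :=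
    Summable.mul_left _ (summable_aux hx (by omega))
  have hle : ∀ n : ℕ, ((x + n) ^ k)⁻¹ - ((x + (n + 1 : ℕ)) ^ k)⁻¹ ≤
      (k:ℝ) * ((x + n) ^ (k + 1))⁻¹ := by
    intro n
    have := (pow_gap (a := x + n) (by positivity) hk).2
    push_cast
    convert this using 3 <;> push_cast <;> ring
  calc (x ^ k)⁻¹ = ∑' n : ℕ, (((x + n) ^ k)⁻¹ - ((x + (n + 1 : ℕ)) ^ k)⁻¹) := htel.2.symm
    _ ≤ ∑' n : ℕ, (k:ℝ) * ((x + n) ^ (k + 1))⁻¹ := Summable.tsum_le_tsum hle htel.1 hsummul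
    _ = (k:ℝ) * S (k + 1) x := by rw [tsum_mul_left]; rfl

lemma hasDerivAt_S {m : ℕ} (hm : 2 ≤ m) {x : ℝ} (hx : 0 < x) :
    HasDerivAt (S m) (-(m : ℝ) * S (m + 1) x) x := by
  have hx2 : (0:ℝ) < x / 2 := by linarith
  have hderivterm : ∀ (n : ℕ) (t : ℝ), 0 < t →
      HasDerivAt (fun t : ℝ => ((t + n) ^ m)⁻¹) (-(m : ℝ) * ((t + n) ^ (m + 1))⁻¹) t := by
    intro n t ht
    have htn : (0:ℝ) < t + n := by positivity
    have h1 : HasDerivAt (fun t : ℝ => t + (n:ℝ)) 1 t := (hasDerivAt_id t).add_const _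
    have h2 : HasDerivAt (fun t : ℝ => (t + (n:ℝ)) ^ m) ((m:ℝ) * (t + n) ^ (m - 1) * 1) t :=
      h1.pow m
    have h3 := h2.inv (by positivity)
    refine HasDerivAt.congr_deriv h3 (Eq.symm ?_)
    have hpowne : (t + (n:ℝ)) ^ (m + 1) ≠ 0 := by positivity
    have hid : ((t + (n:ℝ)) ^ m) ^ 2 = (t + n) ^ (m - 1) * (t + n) ^ (m + 1) := by
      rw [← pow_mul, ← pow_add]
      congr 1
      omega
    rw [hid]
    field_simp
  have := hasDerivAt_tsum_of_isPreconnected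
    (u := fun n : ℕ => (m : ℝ) * ((x / 2 + n) ^ (m + 1))⁻¹)
    (g := fun (n : ℕ) (t : ℝ) => ((t + n) ^ m)⁻¹)
    (g' := fun (n : ℕ) (t : ℝ) => -(m : ℝ) * ((t + n) ^ (m + 1))⁻¹)
    (Summable.mul_left _ (summable_aux hx2 (by omega))) (isOpen_Ioi (a := x / 2))
    ((convex_Ioi _).isPreconnected)
    (fun n t ht => hderivterm n t (lt_trans hx2 ht))
    ?_ (by simpa using (half_lt_self hx) : x ∈ Ioi (x / 2)) (summable_aux hx hm)
    (by simpa using (half_lt_self hx) : x ∈ Ioi (x / 2))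
  · have heq : (∑' n : ℕ, -(m : ℝ) * ((x + n) ^ (m + 1))⁻¹) = -(m : ℝ) * S (m + 1) x := by
      rw [tsum_mul_left]; rfl
    rw [heq] at this
    exact this
  · intro n t ht
    have ht0 : (0:ℝ) < t + n := by
      have := lt_trans hx2 ht
      positivity
    rw [norm_mul, norm_neg, Real.norm_natCast, norm_inv, norm_pow, Real.norm_eq_abs,
      abs_of_pos ht0]
    have hle : ((t + (n:ℝ)) ^ (m+1))⁻¹ ≤ ((x / 2 + (n:ℝ)) ^ (m+1))⁻¹ := by
      gcongr
      linarith [Set.mem_Ioi.mp ht]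
    exact mul_le_mul_of_nonneg_left hle (by positivity)

lemma S_key {k : ℕ} (hk : 2 ≤ k) {x : ℝ} (hx : 0 < x) :
    S (k + 1) x < (k + 1 : ℝ) * (x * S (k + 2) x) := by
  have hk1 : 1 ≤ k := by omega
  have hkr : (2:ℝ) ≤ (k:ℝ) := by exact_mod_cast hk
  have hkpos : (0:ℝ) < (k:ℝ) := by linarith
  set T : ℝ := ∑' n : ℕ, (n : ℝ) * ((x + n) ^ (k + 2))⁻¹ with hTdef
  have hA : Summable (fun n : ℕ => x * ((x + n) ^ (k + 2))⁻¹) :=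
    Summable.mul_left _ (summable_aux hx (by omega))
  have hB : Summable (fun n : ℕ => (n : ℝ) * ((x + n) ^ (k + 2))⁻¹) := by
    apply (summable_aux hx (m := k + 1) (by omega)).of_nonneg_of_le
      (fun n => by positivity)
    intro n
    have hxn : (0:ℝ) < x + n := by positivity
    calc (n : ℝ) * ((x + n) ^ (k + 2))⁻¹ ≤ (x + n) * ((x + n) ^ (k + 2))⁻¹ := by
          gcongr; linarith
      _ = ((x + n) ^ (k + 1))⁻¹ := by
          rw [pow_succ]
          field_simp
  have hsplit : S (k + 1) x = x * S (k + 2) x + T := by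
    have hterm : ∀ n : ℕ, ((x + n) ^ (k + 1))⁻¹ =
        x * ((x + n) ^ (k + 2))⁻¹ + (n : ℝ) * ((x + n) ^ (k + 2))⁻¹ := by
      intro n
      have hxn : (0:ℝ) < x + n := by positivity
      rw [show x * ((x + n) ^ (k + 2))⁻¹ + (n : ℝ) * ((x + n) ^ (k + 2))⁻¹
          = (x + n) * ((x + n) ^ (k + 2))⁻¹ by ring, pow_succ]
      field_simp
      ring
    have : S (k + 1) x = ∑' n : ℕ, (x * ((x + n) ^ (k + 2))⁻¹ +
        (n : ℝ) * ((x + n) ^ (k + 2))⁻¹) := by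
      apply tsum_congr
      intro n
      exact hterm n
    rw [this, Summable.tsum_add hA hB, hTdef]
    congr 1
    rw [tsum_mul_left]
    rfl
  set u : ℝ := x * S (k + 2) x with hu_def
  have hu : 0 < u := mul_pos hx (S_pos (by omega) hx)
  set P : ℝ := (x ^ k)⁻¹ with hP
  have hPpos : 0 < P := by positivity
  have hTP : (k : ℝ) * T ≤ P := by
    have hshift : T = ∑' n : ℕ, ((n : ℕ) + 1 : ℝ) * ((x + ((n : ℕ) + 1)) ^ (k + 2))⁻¹ := by
      rw [hTdef, Summable.tsum_eq_zero_add hB]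
      push_cast
      simp
    have hsumshift : Summable (fun n : ℕ => ((n : ℕ) + 1 : ℝ) * ((x + ((n : ℕ) + 1)) ^ (k + 2))⁻¹) := by
      have := (summable_nat_add_iff 1).2 hB
      apply this.congr
      intro n
      push_cast
      ring_nf
    have hsumtail : Summable (fun n : ℕ => ((x + n + 1) ^ (k + 1))⁻¹) := by
      have h := summable_aux (x := x + 1) (by linarith) (m := k + 1) (by omega)
      apply h.congr
      intro n
      ring_nf
    have hTle : T ≤ ∑' n : ℕ, ((x + n + 1) ^ (k + 1))⁻¹ := by
      rw [hshift]
      apply Summable.tsum_le_tsum _ hsumshift hsumtail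
      intro n
      have hxn : (0:ℝ) < x + n + 1 := by positivity
      calc ((n:ℝ) + 1) * ((x + ((n : ℕ) + 1)) ^ (k + 2))⁻¹
          ≤ (x + n + 1) * ((x + (n + 1 : ℝ)) ^ (k + 2))⁻¹ := by
            push_cast
            gcongr
            linarith
        _ = ((x + n + 1) ^ (k + 1))⁻¹ := by
            rw [show x + ((n : ℝ) + 1) = x + n + 1 by ring, pow_succ]
            field_simp
    have := hTle.trans (tail_le hx hk1)
    rw [le_div_iff₀ hkpos] at this
    linarith
  have hPu : P ≤ ((k : ℝ) + 1) * u := by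
    have h1 := le_S hx (k := k + 1) (by omega)
    have h2 : x * ((x ^ (k + 1))⁻¹ / ((k:ℝ) + 1)) ≤ u := by
      rw [hu_def]
      apply mul_le_mul_of_nonneg_left _ hx.le
      convert h1 using 2
      all_goals first | rfl | (push_cast; ring)
    have h3 : x * ((x ^ (k + 1))⁻¹ / ((k:ℝ) + 1)) = P / ((k:ℝ) + 1) := by
      rw [hP, pow_succ]
      field_simp
    rw [h3] at h2
    rw [div_le_iff₀ (by linarith)] at h2
    linarith
  have hTu : T < (k : ℝ) * u := by
    nlinarith [hTP, hPu, hu, hkr, hkpos]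
  rw [hsplit]
  push_cast
  nlinarith [hTu, hu]

lemma uS_strictAnti {m : ℕ} (hm : 3 ≤ m) :
    StrictAntiOn (fun u : ℝ => u * S m u) (Ioi 0) := by
  have hm2 : 2 ≤ m := by omega
  have H : ∀ u ∈ Ioi (0:ℝ), HasDerivAt (fun u : ℝ => u * S m u)
      (1 * S m u + u * (-(m : ℝ) * S (m + 1) u)) u := by
    intro u hu
    exact (hasDerivAt_id u).mul (hasDerivAt_S hm2 hu)
  apply strictAntiOn_of_deriv_neg (convex_Ioi 0)
  · exact fun u hu => (H u hu).continuousAt.continuousWithinAt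
  · intro u hu
    rw [interior_Ioi] at hu
    rw [(H u hu).deriv]
    obtain ⟨k, rfl⟩ : ∃ k, m = k + 1 := ⟨m - 1, by omega⟩
    have hkey := S_key (k := k) (by omega) hu
    have hu0 : (0:ℝ) < u := hu
    push_cast at hkey ⊢
    nlinarith [hkey]

lemma hasDerivAt_logGamma {x : ℝ} (hx : 0 < x) :
    HasDerivAt (fun t : ℝ => Real.log (Real.Gamma t)) (digamma x) x := by
  have hne : ∀ m : ℕ, x ≠ -(m : ℝ) := by
    intro m
    have h1 : -(m:ℝ) ≤ 0 := by
      simp [Nat.cast_nonneg]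
    exact (lt_of_le_of_lt h1 hx).ne'
  have h1 : DifferentiableAt ℝ (fun t : ℝ => Real.log (Real.Gamma t)) x :=
    (Real.differentiableAt_Gamma hne).log (Real.Gamma_pos_of_pos hx).ne'
  exact h1.hasDerivAt

lemma digamma_rec {x : ℝ} (hx : 0 < x) : digamma (x + 1) = digamma x + x⁻¹ := by
  have hF : HasDerivAt (fun t : ℝ => Real.log (Real.Gamma (t + 1))) (digamma (x + 1)) x :=
    (hasDerivAt_logGamma (by linarith)).comp_add_const x 1
  have hG : HasDerivAt (fun t : ℝ => Real.log t + Real.log (Real.Gamma t))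
      (x⁻¹ + digamma x) x :=
    (Real.hasDerivAt_log hx.ne').add (hasDerivAt_logGamma hx)
  have heq : (fun t : ℝ => Real.log t + Real.log (Real.Gamma t)) =ᶠ[nhds x]
      (fun t : ℝ => Real.log (Real.Gamma (t + 1))) := by
    filter_upwards [Ioi_mem_nhds hx] with t ht
    rw [Real.Gamma_add_one (ne_of_gt ht),
      Real.log_mul (ne_of_gt ht) (Real.Gamma_pos_of_pos ht).ne']
  have hG2 : HasDerivAt (fun t : ℝ => Real.log (Real.Gamma (t + 1))) (x⁻¹ + digamma x) x :=
    hG.congr_of_eventuallyEq heq.symm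
  have := hF.unique hG2
  linarith

lemma digamma_sum {x : ℝ} (hx : 0 < x) (N : ℕ) :
    digamma (x + N) = digamma x + ∑ k ∈ Finset.range N, (x + k)⁻¹ := by
  induction N with
  | zero => simp
  | succ n ih =>
    have hxn : (0:ℝ) < x + n := by positivity
    have h1 : x + (n + 1 : ℕ) = (x + n) + 1 := by push_cast; ring
    rw [h1, digamma_rec hxn, ih, Finset.sum_range_succ]
    ring

lemma digamma_mono : MonotoneOn digamma (Ioi 0) := by
  have h := Real.convexOn_log_Gamma.monotoneOn_deriv (fun t ht => by
    have hne : ∀ m : ℕ, t ≠ -(m : ℝ) := by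
      intro m
      have h1 : -(m:ℝ) ≤ 0 := by simp [Nat.cast_nonneg]
      exact (lt_of_le_of_lt h1 (mem_Ioi.mp ht)).ne'
    exact (Real.differentiableAt_Gamma hne).log
      (Real.Gamma_pos_of_pos (mem_Ioi.mp ht)).ne')
  exact h

lemma digamma_mvt (n : ℕ) (hn : 1 ≤ n) :
    ∃ ξ ∈ Ioo (n : ℝ) ((n : ℝ) + 1), digamma ξ = Real.log n := by
  have hn0 : (0:ℝ) < n := by exact_mod_cast hn
  have hcont : ContinuousOn (fun t : ℝ => Real.log (Real.Gamma t)) (Icc (n:ℝ) ((n:ℝ)+1)) := by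
    intro t ht
    have ht0 : 0 < t := lt_of_lt_of_le hn0 ht.1
    exact (hasDerivAt_logGamma ht0).continuousAt.continuousWithinAt
  obtain ⟨ξ, hξ, hval⟩ := exists_hasDerivAt_eq_slope (fun t => Real.log (Real.Gamma t))
    digamma (by linarith : (n:ℝ) < (n:ℝ)+1) hcont
    (fun t ht => hasDerivAt_logGamma (lt_trans hn0 ht.1))
  refine ⟨ξ, hξ, ?_⟩
  rw [hval, Real.Gamma_add_one (ne_of_gt hn0),
    Real.log_mul (ne_of_gt hn0) (Real.Gamma_pos_of_pos hn0).ne']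
  ring

lemma log_shift (c : ℝ) :
    Tendsto (fun N : ℕ => Real.log ((N : ℝ) + c) - Real.log N) atTop (nhds 0) := by
  have h1 : Tendsto (fun N : ℕ => 1 + c / (N : ℝ)) atTop (nhds 1) := by
    have := tendsto_const_div_atTop_nhds_zero_nat c
    have h2 := tendsto_const_nhds (x := (1:ℝ)) (f := atTop (α := ℕ)) |>.add this
    simpa using h2
  have h2 : Tendsto (fun N : ℕ => Real.log (1 + c / (N : ℝ))) atTop (nhds 0) := by
    have hcont := (Real.continuousAt_log (by norm_num : (1:ℝ) ≠ 0)).tendsto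
    have := hcont.comp h1
    simpa [Function.comp_def] using this
  apply h2.congr'
  filter_upwards [eventually_gt_atTop (max 0 ⌈|c|⌉₊)] with N hN
  have hN0 : (0:ℝ) < N := by
    have : 0 < N := lt_of_le_of_lt (le_max_left _ _) hN
    exact_mod_cast this
  have hNc : (0:ℝ) < (N:ℝ) + c := by
    have : |c| ≤ (⌈|c|⌉₊ : ℝ) := Nat.le_ceil _
    have h3 : (⌈|c|⌉₊ : ℝ) < N := by
      exact_mod_cast lt_of_le_of_lt (le_max_right _ _) hN
    have := neg_abs_le c
    linarith
  rw [show 1 + c / (N:ℝ) = ((N:ℝ) + c) / N by field_simp,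
    Real.log_div hNc.ne' hN0.ne']

lemma digamma_tendsto {x : ℝ} (hx : 0 < x) :
    Tendsto (fun N : ℕ => digamma (x + N) - Real.log N) atTop (nhds 0) := by
  set c : ℕ := ⌈x⌉₊ with hc
  have hxc : x ≤ c := Nat.le_ceil x
  have hlow : ∀ N : ℕ, 2 ≤ N →
      Real.log ((N:ℝ) + (-1:ℝ)) - Real.log N ≤ digamma (x + N) - Real.log N := by
    intro N hN
    obtain ⟨ξ, hξmem, hξval⟩ := digamma_mvt (N - 1) (by omega)
    have hcast : ((N - 1 : ℕ) : ℝ) = (N:ℝ) - 1 := by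
      have : (1:ℕ) ≤ N := by omega
      push_cast [this]
      ring
    have hξpos : 0 < ξ := by
      have := hξmem.1
      rw [hcast] at this
      have : (1:ℝ) ≤ (N:ℝ) - 1 := by
        have : (2:ℕ) ≤ N := hN
        have h2 : (2:ℝ) ≤ (N:ℝ) := by exact_mod_cast this
        linarith
      linarith [hξmem.1, hcast ▸ hξmem.1]
    have hle : ξ ≤ x + N := by
      have h1 := hξmem.2
      rw [hcast] at h1
      linarith
    have := digamma_mono (mem_Ioi.mpr hξpos) (mem_Ioi.mpr (by positivity : (0:ℝ) < x + N)) hle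
    rw [hξval, hcast] at this
    rw [show (N:ℝ) + -1 = (N:ℝ) - 1 by ring]
    linarith
  have hhigh : ∀ N : ℕ, 2 ≤ N →
      digamma (x + N) - Real.log N ≤ Real.log ((N:ℝ) + (c:ℝ)) - Real.log N := by
    intro N hN
    obtain ⟨ξ, hξmem, hξval⟩ := digamma_mvt (N + c) (by omega)
    have hle : x + N ≤ ξ := by
      have h1 := hξmem.1
      push_cast at h1
      linarith
    have := digamma_mono (mem_Ioi.mpr (by positivity : (0:ℝ) < x + N))
      (mem_Ioi.mpr (by
        have h1 := hξmem.1
        have h2 : (0:ℝ) ≤ (N:ℝ) + (c:ℝ) := by positivity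
        push_cast at h1
        linarith)) hle
    rw [hξval] at this
    push_cast at this ⊢
    linarith
  have hlim1 := log_shift (-1)
  have hlim2 := log_shift (c : ℝ)
  apply tendsto_of_tendsto_of_tendsto_of_le_of_le' hlim1 hlim2
  · filter_upwards [eventually_ge_atTop 2] with N hN
    exact hlow N hN
  · filter_upwards [eventually_ge_atTop 2] with N hN
    exact hhigh N hN

lemma summable_dig {x : ℝ} (hx : 0 < x) :
    Summable (fun k : ℕ => (1 + (k : ℝ))⁻¹ - (x + k)⁻¹) := by
  rw [← summable_abs_iff]
  have hmin : 0 < min x 1 := lt_min hx one_pos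
  apply ((summable_aux (x := 1) one_pos (le_refl 2)).mul_left
    (|x - 1| * (min x 1)⁻¹)).of_nonneg_of_le (fun k => abs_nonneg _)
  intro k
  have h1k : (0:ℝ) < 1 + k := by positivity
  have hxk : (0:ℝ) < x + k := by positivity
  have habs : |(1 + (k : ℝ))⁻¹ - (x + k)⁻¹| = |x - 1| / ((1 + k) * (x + k)) := by
    rw [show (1 + (k : ℝ))⁻¹ - (x + k)⁻¹ = (x - 1) / ((1 + k) * (x + k)) by
        field_simp; ring]
    rw [abs_div, abs_of_pos (by positivity : (0:ℝ) < (1 + (k:ℝ)) * (x + k))]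
  rw [habs]
  have hkey : min x 1 * (1 + (k:ℝ)) ≤ x + k := by
    have h1 : min x 1 ≤ x := min_le_left _ _
    have h2 : min x 1 ≤ 1 := min_le_right _ _
    have h3 : (0:ℝ) ≤ (k:ℝ) := Nat.cast_nonneg k
    nlinarith
  rw [show |x - 1| * (min x 1)⁻¹ * ((1 + (k:ℝ)) ^ 2)⁻¹
      = |x - 1| / (min x 1 * (1 + (k:ℝ)) ^ 2) by field_simp]
  apply div_le_div_of_nonneg_left (abs_nonneg _) (by positivity)
  nlinarith

lemma digamma_series {x : ℝ} (hx : 0 < x) :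
    digamma x = digamma 1 + ∑' k : ℕ, ((1 + (k : ℝ))⁻¹ - (x + k)⁻¹) := by
  have hmain : ∀ z : ℝ, 0 < z → Tendsto
      (fun N : ℕ => Real.log N - ∑ k ∈ Finset.range N, (z + k)⁻¹) atTop (nhds (digamma z)) := by
    intro z hz
    have h := digamma_tendsto hz
    have heq : ∀ N : ℕ, digamma (z + N) - Real.log N
        = digamma z - (Real.log N - ∑ k ∈ Finset.range N, (z + k)⁻¹) := by
      intro N
      rw [digamma_sum hz N]
      ring
    have h' : Tendsto (fun N : ℕ =>
        digamma z - (Real.log N - ∑ k ∈ Finset.range N, (z + k)⁻¹)) atTop (nhds 0) :=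
      h.congr heq
    have h2 := (tendsto_const_nhds (x := digamma z) (f := atTop (α := ℕ))).sub h'
    rw [sub_zero] at h2
    apply h2.congr
    intro N
    ring
  have h1 := hmain x hx
  have h2 := hmain 1 one_pos
  have hdiff := h2.sub h1
  have hP : Tendsto (fun N : ℕ => ∑ k ∈ Finset.range N, ((1 + (k : ℝ))⁻¹ - (x + k)⁻¹))
      atTop (nhds (digamma x - digamma 1)) := by
    have : Tendsto (fun N : ℕ =>
        (Real.log N - ∑ k ∈ Finset.range N, ((1:ℝ) + k)⁻¹)
        - (Real.log N - ∑ k ∈ Finset.range N, (x + k)⁻¹)) atTop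
        (nhds (digamma 1 - digamma x)) := hdiff
    have h3 := this.neg
    rw [show digamma x - digamma 1 = -(digamma 1 - digamma x) by ring]
    apply h3.congr
    intro N
    rw [Finset.sum_sub_distrib]
    ring
  have hQ := (summable_dig hx).hasSum.tendsto_sum_nat
  have := tendsto_nhds_unique hQ hP
  rw [this]
  ring

noncomputable def Dfun (x : ℝ) : ℝ := digamma 1 + ∑' k : ℕ, ((1 + (k : ℝ))⁻¹ - (x + k)⁻¹)

lemma hasDerivAt_Dfun {x : ℝ} (hx : 0 < x) : HasDerivAt Dfun (S 2 x) x := by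
  have hx2 : (0:ℝ) < x / 2 := by linarith
  have hmem : x ∈ Ioi (x / 2) := by simpa using half_lt_self hx
  have hderivterm : ∀ (k : ℕ) (t : ℝ), t ∈ Ioi (x / 2) →
      HasDerivAt (fun t : ℝ => (1 + (k : ℝ))⁻¹ - (t + k)⁻¹) (((t + k) ^ 2)⁻¹) t := by
    intro k t ht
    have ht0 : (0:ℝ) < t + k := by
      have := lt_trans hx2 (mem_Ioi.mp ht)
      positivity
    have h1 : HasDerivAt (fun t : ℝ => t + (k:ℝ)) 1 t := (hasDerivAt_id t).add_const _
    have h2 := h1.inv ht0.ne'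
    have h3 := h2.const_sub ((1 + (k : ℝ))⁻¹)
    refine HasDerivAt.congr_deriv h3 (Eq.symm ?_)
    rw [neg_div, neg_neg, one_div]
  have hd := hasDerivAt_tsum_of_isPreconnected
    (u := fun k : ℕ => ((x / 2 + k) ^ 2)⁻¹)
    (g := fun (k : ℕ) (t : ℝ) => (1 + (k : ℝ))⁻¹ - (t + k)⁻¹)
    (g' := fun (k : ℕ) (t : ℝ) => ((t + k) ^ 2)⁻¹)
    (summable_aux hx2 (le_refl 2)) (isOpen_Ioi (a := x / 2))
    ((convex_Ioi _).isPreconnected) hderivterm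
    ?_ hmem (summable_dig hx) hmem
  · have heq : (∑' k : ℕ, ((x + k) ^ 2)⁻¹) = S 2 x := rfl
    rw [heq] at hd
    exact hd.const_add (digamma 1)
  · intro k t ht
    have ht0 : (0:ℝ) < t + k := by
      have := lt_trans hx2 (mem_Ioi.mp ht)
      positivity
    rw [norm_inv, norm_pow, Real.norm_eq_abs, abs_of_pos ht0]
    have hle : ((t + (k:ℝ)) ^ 2)⁻¹ ≤ ((x / 2 + (k:ℝ)) ^ 2)⁻¹ := by
      gcongr
      linarith [mem_Ioi.mp ht]
    exact hle

lemma polygamma_eq (j : ℕ) (hj : 1 ≤ j) {x : ℝ} (hx : 0 < x) :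
    polygamma j x = (-1 : ℝ) ^ (j + 1) * (j.factorial : ℝ) * S (j + 1) x := by
  obtain ⟨l, rfl⟩ : ∃ l, j = l + 1 := ⟨j - 1, by omega⟩
  have main : ∀ l : ℕ, ∀ x : ℝ, 0 < x → iteratedDeriv (l + 1) digamma x
      = (-1 : ℝ) ^ (l + 2) * ((l + 1).factorial : ℝ) * S (l + 2) x := by
    intro l
    induction l with
    | zero =>
      intro x hx
      rw [iteratedDeriv_one]
      have hev : digamma =ᶠ[nhds x] Dfun :=
        Filter.eventuallyEq_of_mem (isOpen_Ioi.mem_nhds (mem_Ioi.mpr hx))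
          (fun t ht => digamma_series (mem_Ioi.mp ht))
      rw [hev.deriv_eq, (hasDerivAt_Dfun hx).deriv]
      norm_num
    | succ l ih =>
      intro x hx
      rw [iteratedDeriv_succ]
      have hev : iteratedDeriv (l + 1) digamma =ᶠ[nhds x]
          (fun t => (-1 : ℝ) ^ (l + 2) * ((l + 1).factorial : ℝ) * S (l + 2) t) :=
        Filter.eventuallyEq_of_mem (isOpen_Ioi.mem_nhds (mem_Ioi.mpr hx))
          (fun t ht => ih t (mem_Ioi.mp ht))
      rw [hev.deriv_eq]
      have hS := (hasDerivAt_S (m := l + 2) (by omega) hx).const_mul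
        ((-1 : ℝ) ^ (l + 2) * ((l + 1).factorial : ℝ))
      rw [hS.deriv]
      have : ((l + 1 + 1).factorial : ℝ) = ((l + 2 : ℕ) : ℝ) * ((l + 1).factorial : ℝ) := by
        rw [show l + 1 + 1 = l + 2 by ring, Nat.factorial_succ]
        push_cast
        ring
      rw [this]
      push_cast
      ring
  exact main l x hx

end PGaux

theorem stmt7 (i : ℕ) (hi : 0 < i) (y : ℝ) (hy : 0 < y) :
    (1 < y → StrictAntiOn
      (fun x : ℝ => |polygamma i x| + |polygamma i y| - |polygamma i (x * y)|) (Set.Ioi 0)) ∧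
    (y < 1 → StrictMonoOn
      (fun x : ℝ => |polygamma i x| + |polygamma i y| - |polygamma i (x * y)|) (Set.Ioi 0)) := by
  classical
  have hi1 : 1 ≤ i := hi
  have habs : ∀ z : ℝ, 0 < z →
      |polygamma i z| = (i.factorial : ℝ) * PGaux.S (i + 1) z := by
    intro z hz
    rw [PGaux.polygamma_eq i hi1 hz, abs_mul, abs_mul, abs_pow, abs_neg, abs_one, one_pow,
      one_mul, Nat.abs_cast, abs_of_pos (PGaux.S_pos (by omega) hz)]
  set g : ℝ → ℝ := fun x =>
    (i.factorial : ℝ) * PGaux.S (i + 1) x + |polygamma i y|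
      - (i.factorial : ℝ) * PGaux.S (i + 1) (x * y) with hg
  have hfg : ∀ z ∈ Set.Ioi (0:ℝ),
      |polygamma i z| + |polygamma i y| - |polygamma i (z * y)| = g z := by
    intro z hz
    rw [hg]
    rw [habs z (Set.mem_Ioi.mp hz), habs (z * y) (mul_pos (Set.mem_Ioi.mp hz) hy)]
  have key : ∀ x ∈ Set.Ioi (0:ℝ), HasDerivAt g
      ((i.factorial : ℝ) * (-((i:ℝ) + 1) * PGaux.S (i + 2) x)
        - (i.factorial : ℝ) * (-((i:ℝ) + 1) * PGaux.S (i + 2) (x * y) * y)) x := by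
    intro x hx
    have hx0 : (0:ℝ) < x := hx
    have hxy : 0 < x * y := mul_pos hx0 hy
    have h1 := (PGaux.hasDerivAt_S (m := i + 1) (by omega) hx0).const_mul (i.factorial : ℝ)
    have h2 : HasDerivAt (fun x : ℝ => PGaux.S (i + 1) (x * y))
        (-((i:ℝ) + 1) * PGaux.S (i + 2) (x * y) * y) x := by
      have hout := PGaux.hasDerivAt_S (m := i + 1) (by omega) hxy
      have hin : HasDerivAt (fun x : ℝ => x * y) y x := hasDerivAt_mul_const y
      have hcomp := HasDerivAt.comp x hout hin
      have : (PGaux.S (i + 1) ∘ fun x : ℝ => x * y) = fun x : ℝ => PGaux.S (i + 1) (x * y) :=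
        rfl
      rw [this] at hcomp
      refine HasDerivAt.congr_deriv hcomp (Eq.symm ?_)
      push_cast
      ring
    have h3 := (h1.add_const (|polygamma i y|)).sub (h2.const_mul (i.factorial : ℝ))
    refine HasDerivAt.congr_deriv h3 (Eq.symm ?_)
    push_cast
    ring
  have hfacpos : (0:ℝ) < (i.factorial : ℝ) := by
    exact_mod_cast Nat.factorial_pos i
  have hi1pos : (0:ℝ) < (i:ℝ) + 1 := by positivity
  have hanti := PGaux.uS_strictAnti (m := i + 2) (by omega)
  constructor
  · intro hy1
    have hganti : StrictAntiOn g (Set.Ioi 0) := by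
      apply strictAntiOn_of_deriv_neg (convex_Ioi 0)
      · exact fun x hx => (key x hx).continuousAt.continuousWithinAt
      · intro x hx
        rw [interior_Ioi] at hx
        have hx0 : (0:ℝ) < x := hx
        rw [(key x hx).deriv]
        have hxy : 0 < x * y := mul_pos hx0 hy
        have hlt : x < x * y := by nlinarith
        have h := hanti (Set.mem_Ioi.mpr hx0) (Set.mem_Ioi.mpr hxy) hlt
        have hSS : y * PGaux.S (i + 2) (x * y) < PGaux.S (i + 2) x := by
          have h2 : x * (y * PGaux.S (i + 2) (x * y)) < x * PGaux.S (i + 2) x := by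
            calc x * (y * PGaux.S (i + 2) (x * y)) = (x * y) * PGaux.S (i + 2) (x * y) := by
                  ring
              _ < x * PGaux.S (i + 2) x := h
          exact lt_of_mul_lt_mul_left h2 hx0.le
        have hprod := mul_pos (mul_pos hfacpos hi1pos) (sub_pos.mpr hSS)
        nlinarith [hprod]
    intro a ha b hb hab
    have := hganti ha hb hab
    simpa only [hfg a ha, hfg b hb] using this
  · intro hy1
    have hgmono : StrictMonoOn g (Set.Ioi 0) := by
      apply strictMonoOn_of_deriv_pos (convex_Ioi 0)
      · exact fun x hx => (key x hx).continuousAt.continuousWithinAt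
      · intro x hx
        rw [interior_Ioi] at hx
        have hx0 : (0:ℝ) < x := hx
        rw [(key x hx).deriv]
        have hxy : 0 < x * y := mul_pos hx0 hy
        have hlt : x * y < x := by nlinarith
        have h := hanti (Set.mem_Ioi.mpr hxy) (Set.mem_Ioi.mpr hx0) hlt
        have hSS : PGaux.S (i + 2) x < y * PGaux.S (i + 2) (x * y) := by
          have h2 : x * PGaux.S (i + 2) x < x * (y * PGaux.S (i + 2) (x * y)) := by
            calc x * PGaux.S (i + 2) x < (x * y) * PGaux.S (i + 2) (x * y) := h
              _ = x * (y * PGaux.S (i + 2) (x * y)) := by ring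
          exact lt_of_mul_lt_mul_left h2 hx0.le
        have hprod := mul_pos (mul_pos hfacpos hi1pos) (sub_pos.mpr hSS)
        nlinarith [hprod]
    intro a ha b hb hab
    have := hgmono ha hb hab
    simpa only [hfg a ha, hfg b hb] using this
end

section
/- For every positive integer i, the function g(θ) = 2|ψ^(i)(θ)| − |ψ^(i)(θ²)| is strictly increasing on (0, 1), satisfies g(1) = |ψ^(i)(1)| > 0, and tends to −∞ as θ → 0⁺; consequently g has a unique zero θ_i in (0, 1). -/
open Real Filter Set
open scoped Topology

noncomputable def Pg (k : ℕ) (x : ℝ) : ℝ := ∑' n : ℕ, ((x + n) ^ k)⁻¹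

lemma hasSum_inv_sq_succ : HasSum (fun n : ℕ => (((n : ℝ) + 1) ^ 2)⁻¹) (π ^ 2 / 6) := by
  have h := hasSum_zeta_two
  have h2 := (hasSum_nat_add_iff' (f := fun n : ℕ => (1 : ℝ) / (n : ℝ) ^ 2) 1).2 h
  simp only [Finset.range_one, Finset.sum_singleton, Nat.cast_zero] at h2
  norm_num at h2
  exact h2

lemma aux_pow_le {k : ℕ} (hk : 2 ≤ k) {x : ℝ} (hx : 0 ≤ x) (n : ℕ) :
    ((x + (n + 1)) ^ k)⁻¹ ≤ (((n : ℝ) + 1) ^ 2)⁻¹ := by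
  have h1 : ((n : ℝ) + 1) ^ 2 ≤ (x + (n + 1)) ^ k :=
    calc ((n : ℝ) + 1) ^ 2 ≤ ((n : ℝ) + 1) ^ k := pow_le_pow_right₀ (by linarith [Nat.cast_nonneg (α:=ℝ) n]) hk
      _ ≤ (x + (n + 1)) ^ k := pow_le_pow_left₀ (by positivity) (by linarith) k
  exact inv_anti₀ (by positivity) h1

lemma summable_shift {k : ℕ} (hk : 2 ≤ k) {x : ℝ} (hx : 0 ≤ x) :
    Summable (fun n : ℕ => ((x + (n + 1)) ^ k)⁻¹) :=
  Summable.of_nonneg_of_le (fun n => by positivity) (aux_pow_le hk hx)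
    hasSum_inv_sq_succ.summable

lemma summable_Pg {k : ℕ} (hk : 2 ≤ k) {x : ℝ} (hx : 0 < x) :
    Summable (fun n : ℕ => ((x + n) ^ k)⁻¹) := by
  rw [← summable_nat_add_iff 1]
  have := summable_shift hk hx.le
  convert this using 3 with n
  all_goals first | rfl | (push_cast; ring)

lemma Pg_split {k : ℕ} (hk : 2 ≤ k) {x : ℝ} (hx : 0 < x) :
    Pg k x = (x ^ k)⁻¹ + ∑' n : ℕ, ((x + (n + 1)) ^ k)⁻¹ := by
  rw [Pg, Summable.tsum_eq_zero_add (summable_Pg hk hx)]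
  congr 1
  · norm_num
  apply tsum_congr
  intro n
  push_cast
  ring_nf

lemma tail_le_two {k : ℕ} (hk : 2 ≤ k) {x : ℝ} (hx : 0 < x) :
    ∑' n : ℕ, ((x + (n + 1)) ^ k)⁻¹ ≤ 2 := by
  have h1 : ∑' n : ℕ, ((x + (n + 1)) ^ k)⁻¹ ≤ ∑' n : ℕ, (((n : ℝ) + 1) ^ 2)⁻¹ :=
    Summable.tsum_le_tsum (aux_pow_le hk hx.le) (summable_shift hk hx.le)
      hasSum_inv_sq_succ.summable
  rw [hasSum_inv_sq_succ.tsum_eq] at h1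
  have : π < 3.15 := pi_lt_d2
  nlinarith [pi_pos]

lemma Pg_pos {k : ℕ} (hk : 2 ≤ k) {x : ℝ} (hx : 0 < x) : 0 < Pg k x := by
  apply Summable.tsum_pos (summable_Pg hk hx) (fun n => by positivity) 0
  norm_num
  positivity

lemma key_ineq {k : ℕ} (hk : 3 ≤ k) {x : ℝ} (hx0 : 0 < x) (hx1 : x < 1) :
    Pg k x < k * x * Pg (k + 1) x := by
  have hk2 : 2 ≤ k := by omega
  have hk2' : 2 ≤ k + 1 := by omega
  rw [Pg_split hk2 hx0, Pg_split hk2' hx0]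
  have hS : ∑' n : ℕ, ((x + (n + 1)) ^ k)⁻¹ ≤ 2 := tail_le_two hk2 hx0
  have hS' : 0 ≤ ∑' n : ℕ, ((x + (n + 1)) ^ (k + 1))⁻¹ :=
    tsum_nonneg (fun n => by positivity)
  have hxk : x ^ k < 1 := pow_lt_one₀ hx0.le hx1 (by omega)
  have hxk0 : 0 < x ^ k := by positivity
  have h1 : k * x * (x ^ (k + 1))⁻¹ = k * (x ^ k)⁻¹ := by
    rw [pow_succ]
    field_simp
  have h2 : (2 : ℝ) < 2 * (x ^ k)⁻¹ := by
    rw [lt_mul_iff_one_lt_right (by norm_num)]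
    exact (one_lt_inv_iff₀).2 ⟨hxk0, hxk⟩
  have hk3 : (3 : ℝ) ≤ (k : ℝ) := by exact_mod_cast hk
  have hxinv : (1:ℝ) ≤ (x ^ k)⁻¹ := le_of_lt ((one_lt_inv_iff₀).2 ⟨hxk0, hxk⟩)
  calc (x ^ k)⁻¹ + ∑' n : ℕ, ((x + (n + 1)) ^ k)⁻¹
      < (x ^ k)⁻¹ + 2 * (x ^ k)⁻¹ := by linarith
    _ ≤ k * (x ^ k)⁻¹ := by nlinarith
    _ ≤ k * x * ((x ^ (k+1))⁻¹ + ∑' n : ℕ, ((x + (n + 1)) ^ (k+1))⁻¹) := by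
        rw [mul_add, h1]
        nlinarith [mul_nonneg (mul_nonneg (by linarith : (0:ℝ) ≤ (k:ℝ)) hx0.le) hS']

lemma hasDerivAt_term {k : ℕ} (hk : 1 ≤ k) (n : ℕ) {y : ℝ} (hy : 0 < y + n) :
    HasDerivAt (fun z : ℝ => ((z + n) ^ k)⁻¹) (-(k : ℝ) * ((y + n) ^ (k + 1))⁻¹) y := by
  have h1 : HasDerivAt (fun z : ℝ => z + n) 1 y := (hasDerivAt_id y).add_const _
  have h2 : HasDerivAt (fun z : ℝ => (z + n) ^ k)
      ((k : ℝ) * (y + n) ^ (k - 1) * 1) y := h1.pow k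
  have h3 := h2.inv (by positivity)
  convert h3 using 1
  all_goals try with_reducible_and_instances rfl
  have hpow : ((y + n) ^ k) ^ 2 = (y + n) ^ (k + 1) * (y + n) ^ (k - 1) := by
    rw [← pow_mul, ← pow_add]
    congr 1
    omega
  rw [mul_one, hpow, neg_mul, neg_div, neg_inj, eq_div_iff (by positivity)]
  field_simp

lemma hasDerivAt_Pg {k : ℕ} (hk : 2 ≤ k) {x : ℝ} (hx : 0 < x) :
    HasDerivAt (Pg k) (-(k : ℝ) * Pg (k + 1) x) x := by
  have hk1 : 2 ≤ k + 1 := by omega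
  have hx2 : 0 < x / 2 := by linarith
  have hbd : ∀ (n : ℕ) (y : ℝ), y ∈ Ioi (x / 2) →
      ‖-(k : ℝ) * ((y + n) ^ (k + 1))⁻¹‖ ≤ (k : ℝ) * ((x / 2 + n) ^ (k + 1))⁻¹ := by
    intro n y hy
    simp only [mem_Ioi] at hy
    have hy0 : (0:ℝ) < y := hx2.trans hy
    rw [norm_mul, norm_neg, norm_natCast, Real.norm_eq_abs, abs_of_nonneg (by positivity)]
    apply mul_le_mul_of_nonneg_left _ (Nat.cast_nonneg k)
    apply inv_anti₀ (by positivity)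
    apply pow_le_pow_left₀ (by positivity) (by linarith)
  have hder := hasDerivAt_tsum_of_isPreconnected (𝕜 := ℝ) (F := ℝ) (α := ℕ)
    (g := fun (n : ℕ) (z : ℝ) => ((z + n) ^ k)⁻¹)
    (g' := fun (n : ℕ) (y : ℝ) => -(k : ℝ) * ((y + n) ^ (k + 1))⁻¹)
    (u := fun n : ℕ => (k : ℝ) * ((x / 2 + n) ^ (k + 1))⁻¹)
    (t := Ioi (x / 2)) (y₀ := x) (y := x)
    ((summable_Pg hk1 hx2).mul_left _) isOpen_Ioi (convex_Ioi _).isPreconnected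
    (fun n y hy => hasDerivAt_term (by omega) n
      (by simp only [mem_Ioi] at hy; have : (0:ℝ) < y := hx2.trans hy; positivity))
    hbd (mem_Ioi.2 (by linarith)) (summable_Pg hk hx) (mem_Ioi.2 (by linarith))
  have heq : ∑' n : ℕ, -(k : ℝ) * ((x + n) ^ (k + 1))⁻¹ = -(k : ℝ) * Pg (k + 1) x := by
    rw [Pg, tsum_mul_left]
  rw [heq] at hder
  exact hder

lemma log_one_add_le {t : ℝ} (ht : 0 ≤ t) : Real.log (1 + t) ≤ t := by
  have := Real.log_le_sub_one_of_pos (x := 1 + t) (by linarith)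
  linarith

lemma le_log_one_add {t : ℝ} (ht : 0 ≤ t) : t - t ^ 2 ≤ Real.log (1 + t) := by
  have h := Real.one_sub_inv_le_log_of_pos (x := 1 + t) (by linarith)
  have h1t : (0:ℝ) < 1 + t := by linarith
  have heq : 1 - (1 + t)⁻¹ = t / (1 + t) := by field_simp; ring
  have key : t - t ^ 2 ≤ t / (1 + t) := by
    rw [le_div_iff₀ h1t]
    nlinarith
  linarith [heq ▸ h]

noncomputable def fE (m : ℕ) (x : ℝ) : ℝ :=
  x * Real.log (1 + ((m : ℝ) + 1)⁻¹) - Real.log (1 + x * ((m : ℝ) + 1)⁻¹)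

lemma abs_fE_le {x : ℝ} (hx : 0 ≤ x) (m : ℕ) :
    |fE m x| ≤ (x + x ^ 2) * (((m : ℝ) + 1) ^ 2)⁻¹ := by
  set a : ℝ := ((m : ℝ) + 1)⁻¹ with ha_def
  have ha : 0 < a := by positivity
  have h1 := log_one_add_le ha.le
  have h2 := le_log_one_add ha.le
  have h3 := log_one_add_le (t := x * a) (by positivity)
  have h4 := le_log_one_add (t := x * a) (by positivity)
  have haa : a ^ 2 = (((m : ℝ) + 1) ^ 2)⁻¹ := by rw [ha_def, inv_pow]
  rw [abs_le, fE, ← ha_def, ← haa]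
  constructor <;> nlinarith [sq_nonneg a, sq_nonneg x, mul_nonneg hx ha.le]

lemma summable_fE {x : ℝ} (hx : 0 ≤ x) : Summable (fun m => fE m x) := by
  apply Summable.of_norm_bounded (hasSum_inv_sq_succ.summable.mul_left (x + x ^ 2))
  intro m
  rw [Real.norm_eq_abs]
  exact abs_fE_le hx m

lemma sum_log_telescope (n : ℕ) :
    ∑ m ∈ Finset.range n, Real.log (1 + ((m : ℝ) + 1)⁻¹) = Real.log ((n : ℝ) + 1) := by
  induction n with
  | zero => simp
  | succ n ih =>
    rw [Finset.sum_range_succ, ih]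
    rw [← Real.log_mul (by positivity) (by positivity)]
    congr 1
    push_cast
    field_simp

lemma hasSum_fE {x : ℝ} (hx : 0 < x) :
    HasSum (fun m => fE m x) (Real.log (Real.Gamma x) + Real.log x) := by
  rw [(summable_fE hx.le).hasSum_iff_tendsto_nat]
  have key : ∀ n : ℕ, ∑ m ∈ Finset.range n, fE m x =
      Real.BohrMollerup.logGammaSeq x n + Real.log x
        + x * (Real.log ((n : ℝ) + 1) - Real.log (n : ℝ)) := by
    intro n
    rw [Real.BohrMollerup.logGammaSeq]
    have e1 : ∑ m ∈ Finset.range n, fE m x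
        = x * Real.log ((n : ℝ) + 1)
          - ∑ m ∈ Finset.range n, Real.log (1 + x * ((m : ℝ) + 1)⁻¹) := by
      rw [← sum_log_telescope n, Finset.mul_sum, ← Finset.sum_sub_distrib]
      exact Finset.sum_congr rfl fun m _ => rfl
    have e2 : ∀ m ∈ Finset.range n, Real.log (1 + x * ((m : ℝ) + 1)⁻¹)
        = Real.log (x + ((m : ℝ) + 1)) - Real.log ((m : ℝ) + 1) := by
      intro m _
      rw [← Real.log_div (by positivity) (by positivity)]
      congr 1
      field_simp
      ring
    rw [e1, Finset.sum_congr rfl e2, Finset.sum_sub_distrib]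
    have e3 : ∑ m ∈ Finset.range n, Real.log ((m : ℝ) + 1) = Real.log ((n.factorial : ℕ) : ℝ) := by
      rw [← Real.log_prod (fun m _ => by positivity)]
      congr 1
      push_cast [← Finset.prod_range_add_one_eq_factorial]
      rfl
    have e4 : ∑ m ∈ Finset.range (n + 1), Real.log (x + (m : ℝ))
        = Real.log x + ∑ m ∈ Finset.range n, Real.log (x + ((m : ℝ) + 1)) := by
      rw [Finset.sum_range_succ', add_comm]
      congr 1
      · norm_num
      · apply Finset.sum_congr rfl
        intro m _
        congr 1
        push_cast
        ring
    rw [e3, e4]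
    ring
  have hlim : Tendsto (fun n : ℕ => Real.BohrMollerup.logGammaSeq x n + Real.log x
      + x * (Real.log ((n : ℝ) + 1) - Real.log (n : ℝ))) atTop
      (𝓝 (Real.log (Real.Gamma x) + Real.log x)) := by
    have h1 := Real.BohrMollerup.tendsto_log_gamma hx
    have h2 := Real.tendsto_log_nat_add_one_sub_log.const_mul x
    have := (h1.add_const (Real.log x)).add h2
    simpa using this
  exact Tendsto.congr (fun n => (key n).symm) hlim

noncomputable def dfE (m : ℕ) (y : ℝ) : ℝ :=
  Real.log (1 + ((m : ℝ) + 1)⁻¹) - (y + ((m : ℝ) + 1))⁻¹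

lemma abs_dfE_le {R : ℝ} (hR : 0 < R) (m : ℕ) {y : ℝ} (hy0 : 0 < y) (hyR : y < R) :
    |dfE m y| ≤ (1 + R) * (((m : ℝ) + 1) ^ 2)⁻¹ := by
  set a : ℝ := ((m : ℝ) + 1)⁻¹ with ha_def
  have hm1 : (0:ℝ) < (m : ℝ) + 1 := by positivity
  have ha : 0 < a := by positivity
  have h1 := log_one_add_le ha.le
  have h2 := le_log_one_add ha.le
  have haa : a ^ 2 = (((m : ℝ) + 1) ^ 2)⁻¹ := by rw [ha_def, inv_pow]
  have hsplit : a - (y + ((m : ℝ) + 1))⁻¹ = y / (((m : ℝ) + 1) * (y + ((m : ℝ) + 1))) := by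
    rw [ha_def]
    field_simp; ring
  have hbound : 0 ≤ a - (y + ((m : ℝ) + 1))⁻¹ ∧
      a - (y + ((m : ℝ) + 1))⁻¹ ≤ R * a ^ 2 := by
    constructor
    · rw [hsplit]
      positivity
    · rw [hsplit, div_le_iff₀ (by positivity), ha_def]
      have h3 : ((m : ℝ) + 1)⁻¹ ^ 2 = (((m : ℝ) + 1) * ((m : ℝ) + 1))⁻¹ := by
        rw [sq]
        rw [mul_inv]
      rw [h3]
      have h4 : R * (((m : ℝ) + 1) * ((m : ℝ) + 1))⁻¹ * (((m : ℝ) + 1) * (y + ((m : ℝ) + 1)))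
          = R * (y + ((m : ℝ) + 1)) / ((m : ℝ) + 1) := by
        field_simp
      rw [h4]
      rw [le_div_iff₀ hm1]
      nlinarith
  rw [abs_le, dfE, ← ha_def, ← haa]
  constructor <;> nlinarith [sq_nonneg a]

lemma summable_dfE {y : ℝ} (hy : 0 < y) : Summable (fun m => dfE m y) := by
  apply Summable.of_norm_bounded (hasSum_inv_sq_succ.summable.mul_left (1 + (y + 1)))
  intro m
  rw [Real.norm_eq_abs]
  exact abs_dfE_le (by linarith) m hy (by linarith)

lemma hasDerivAt_fE (m : ℕ) {y : ℝ} (hy : 0 < y) :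
    HasDerivAt (fun z => fE m z) (dfE m y) y := by
  have hm1 : (0:ℝ) < (m : ℝ) + 1 := by positivity
  have h1 : HasDerivAt (fun z : ℝ => z * Real.log (1 + ((m : ℝ) + 1)⁻¹))
      (Real.log (1 + ((m : ℝ) + 1)⁻¹)) y := by
    simpa using (hasDerivAt_id y).mul_const (Real.log (1 + ((m : ℝ) + 1)⁻¹))
  have hpos : 0 < 1 + y * ((m : ℝ) + 1)⁻¹ := by positivity
  have h2 : HasDerivAt (fun z : ℝ => 1 + z * ((m : ℝ) + 1)⁻¹) (((m : ℝ) + 1)⁻¹) y := by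
    simpa using ((hasDerivAt_id y).mul_const (((m : ℝ) + 1)⁻¹)).const_add 1
  have h3 := (h2.log (ne_of_gt hpos))
  have h4 := h1.sub h3
  convert h4 using 1
  all_goals try rfl
  rw [dfE]
  congr 1
  rw [eq_div_iff (ne_of_gt hpos)]
  field_simp
  ring

lemma hasDerivAt_sum_fE {x : ℝ} (hx : 0 < x) :
    HasDerivAt (fun z => ∑' m : ℕ, fE m z) (∑' m : ℕ, dfE m x) x := by
  refine hasDerivAt_tsum_of_isPreconnected (𝕜 := ℝ) (F := ℝ) (α := ℕ)
    (g := fun (m : ℕ) (z : ℝ) => fE m z)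
    (g' := fun (m : ℕ) (y : ℝ) => dfE m y)
    (u := fun m : ℕ => (1 + (x + 1)) * (((m : ℝ) + 1) ^ 2)⁻¹)
    (t := Ioo 0 (x + 1)) (y₀ := x) (y := x)
    (hasSum_inv_sq_succ.summable.mul_left _) isOpen_Ioo (convex_Ioo _ _).isPreconnected
    (fun m y hy => hasDerivAt_fE m hy.1) (fun m y hy => ?_)
    (mem_Ioo.2 ⟨hx, by linarith⟩) (summable_fE hx.le) (mem_Ioo.2 ⟨hx, by linarith⟩)
  rw [Real.norm_eq_abs]
  exact abs_dfE_le (by linarith) m hy.1 hy.2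

noncomputable def psiR : ℝ → ℝ := fun y => -y⁻¹ + ∑' m : ℕ, dfE m y

lemma digamma_eq {y : ℝ} (hy : 0 < y) : digamma y = psiR y := by
  have hev : (fun z : ℝ => -Real.log z + ∑' m : ℕ, fE m z) =ᶠ[𝓝 y]
      (fun z => Real.log (Real.Gamma z)) := by
    filter_upwards [IsOpen.mem_nhds isOpen_Ioi (mem_Ioi.2 hy)] with z hz
    rw [mem_Ioi] at hz
    have := (hasSum_fE hz).tsum_eq
    rw [this]
    ring
  have h1 : HasDerivAt (fun z : ℝ => -Real.log z + ∑' m : ℕ, fE m z) (psiR y) y := by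
    have := ((Real.hasDerivAt_log (ne_of_gt hy)).neg).add (hasDerivAt_sum_fE hy)
    simpa [psiR, Pi.add_def, Pi.neg_def] using this
  have h2 : HasDerivAt (fun z : ℝ => Real.log (Real.Gamma z)) (psiR y) y :=
    h1.congr_of_eventuallyEq hev.symm
  exact h2.deriv

lemma hasDerivAt_dfE (m : ℕ) {y : ℝ} (hy : 0 < y) :
    HasDerivAt (fun z => dfE m z) (((y + ((m : ℝ) + 1)) ^ 2)⁻¹) y := by
  have h1 : HasDerivAt (fun z : ℝ => z + ((m : ℝ) + 1)) 1 y := (hasDerivAt_id y).add_const _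
  have h2 := (h1.inv (by positivity)).const_sub (Real.log (1 + ((m : ℝ) + 1)⁻¹))
  convert h2 using 1
  all_goals try rfl
  field_simp

lemma hasDerivAt_tsum_dfE {x : ℝ} (hx : 0 < x) :
    HasDerivAt (fun z => ∑' m : ℕ, dfE m z) (∑' m : ℕ, ((x + ((m : ℝ) + 1)) ^ 2)⁻¹) x := by
  refine hasDerivAt_tsum_of_isPreconnected (𝕜 := ℝ) (F := ℝ) (α := ℕ)
    (g := fun (m : ℕ) (z : ℝ) => dfE m z)
    (g' := fun (m : ℕ) (y : ℝ) => ((y + ((m : ℝ) + 1)) ^ 2)⁻¹)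
    (u := fun m : ℕ => (((m : ℝ) + 1) ^ 2)⁻¹)
    (t := Ioi 0) (y₀ := x) (y := x)
    hasSum_inv_sq_succ.summable isOpen_Ioi (convex_Ioi _).isPreconnected
    (fun m y hy => hasDerivAt_dfE m hy) (fun m y hy => ?_)
    (mem_Ioi.2 hx) (summable_dfE hx) (mem_Ioi.2 hx)
  rw [mem_Ioi] at hy
  rw [Real.norm_eq_abs, abs_of_nonneg (by positivity)]
  apply inv_anti₀ (by positivity)
  apply pow_le_pow_left₀ (by positivity) (by linarith)

lemma hasDerivAt_psiR {x : ℝ} (hx : 0 < x) : HasDerivAt psiR (Pg 2 x) x := by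
  have h0 : HasDerivAt (fun y : ℝ => -y⁻¹) ((x ^ 2)⁻¹) x := by
    simpa [Pi.neg_def] using (hasDerivAt_inv (ne_of_gt hx)).neg
  have h1 := h0.add (hasDerivAt_tsum_dfE hx)
  have : (x ^ 2)⁻¹ + ∑' m : ℕ, ((x + ((m : ℝ) + 1)) ^ 2)⁻¹ = Pg 2 x := by
    rw [Pg_split (le_refl 2) hx]
  rw [this] at h1
  exact h1

lemma polygamma_eq {i : ℕ} (hi : 1 ≤ i) {x : ℝ} (hx : 0 < x) :
    polygamma i x = (-1) ^ (i + 1) * (i.factorial : ℝ) * Pg (i + 1) x := by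
  induction i, hi using Nat.le_induction generalizing x with
  | base =>
    have hev : digamma =ᶠ[𝓝 x] psiR := by
      filter_upwards [IsOpen.mem_nhds isOpen_Ioi (mem_Ioi.2 hx)] with z hz
      exact digamma_eq hz
    rw [polygamma, iteratedDeriv_one]
    rw [Filter.EventuallyEq.deriv_eq hev]
    rw [(hasDerivAt_psiR hx).deriv]
    norm_num
  | succ j hj ih =>
    rw [polygamma, iteratedDeriv_succ]
    have hev : iteratedDeriv j digamma =ᶠ[𝓝 x]
        (fun y => (-1) ^ (j + 1) * (j.factorial : ℝ) * Pg (j + 1) y) := by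
      filter_upwards [IsOpen.mem_nhds isOpen_Ioi (mem_Ioi.2 hx)] with z hz
      exact ih hz
    rw [Filter.EventuallyEq.deriv_eq hev]
    have hd := ((hasDerivAt_Pg (k := j + 1) (by omega) hx).const_mul
      ((-1) ^ (j + 1) * (j.factorial : ℝ)))
    rw [hd.deriv]
    rw [Nat.factorial_succ]
    push_cast
    ring

lemma abs_polygamma {i : ℕ} (hi : 1 ≤ i) {x : ℝ} (hx : 0 < x) :
    |polygamma i x| = (i.factorial : ℝ) * Pg (i + 1) x := by
  rw [polygamma_eq hi hx, abs_mul, abs_mul, abs_pow, abs_neg, abs_one, one_pow, one_mul,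
    Nat.abs_cast, abs_of_pos (Pg_pos (by omega) hx)]

lemma Pg_lt {k : ℕ} (hk : 3 ≤ k) {θ : ℝ} (h0 : 0 < θ) (h1 : θ < 1) :
    Pg k θ < θ * Pg k (θ ^ 2) := by
  have hθ2pos : 0 < θ ^ 2 := by positivity
  have hθ2lt : θ ^ 2 < θ := by nlinarith
  have hθ2lt1 : θ ^ 2 < 1 := by nlinarith
  have hH : StrictAntiOn (fun x => x * Pg k x) (Ioo (0:ℝ) 1) := by
    apply strictAntiOn_of_deriv_neg (convex_Ioo 0 1)
    · intro x hx
      exact (((hasDerivAt_id x).mul (hasDerivAt_Pg (by omega) hx.1)).continuousAt).continuousWithinAt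
    · intro x hx
      rw [interior_Ioo] at hx
      have hd : HasDerivAt (fun x => x * Pg k x)
          (1 * Pg k x + x * (-(k : ℝ) * Pg (k + 1) x)) x :=
        (hasDerivAt_id x).mul (hasDerivAt_Pg (by omega) hx.1)
      rw [hd.deriv]
      have hkey := key_ineq hk hx.1 hx.2
      nlinarith
  have h := hH (mem_Ioo.2 ⟨hθ2pos, hθ2lt1⟩) (mem_Ioo.2 ⟨h0, h1⟩) hθ2lt
  simp only at h
  nlinarith

lemma hasDerivAt_G (i : ℕ) (hi : 0 < i) {θ : ℝ} (hθ : 0 < θ) :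
    HasDerivAt (fun t : ℝ => (i.factorial : ℝ) * (2 * Pg (i + 1) t - Pg (i + 1) (t ^ 2)))
      (2 * (i.factorial : ℝ) * ((i : ℝ) + 1) * (θ * Pg (i + 2) (θ ^ 2) - Pg (i + 2) θ)) θ := by
  have hθ2 : 0 < θ ^ 2 := by positivity
  have h1 : HasDerivAt (Pg (i + 1)) (-(((i + 1) : ℕ) : ℝ) * Pg (i + 2) θ) θ :=
    hasDerivAt_Pg (k := i + 1) (by omega) hθ
  have h2' : HasDerivAt (Pg (i + 1)) (-(((i + 1) : ℕ) : ℝ) * Pg (i + 2) (θ ^ 2)) (θ ^ 2) :=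
    hasDerivAt_Pg (k := i + 1) (by omega) hθ2
  have hsq : HasDerivAt (fun t : ℝ => t ^ 2) (2 * θ) θ := by
    simpa using hasDerivAt_pow 2 θ
  have h2 : HasDerivAt (fun t : ℝ => Pg (i + 1) (t ^ 2))
      (-(((i + 1) : ℕ) : ℝ) * Pg (i + 2) (θ ^ 2) * (2 * θ)) θ := by
    simpa [Function.comp_def] using HasDerivAt.comp (x := θ) (h := fun t : ℝ => t ^ 2) h2' hsq
  have h3 := ((h1.const_mul 2).sub h2).const_mul (i.factorial : ℝ)
  convert h3 using 1
  all_goals try rfl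
  push_cast
  ring

theorem stmt10 (i : ℕ) (hi : 0 < i) :
    StrictMonoOn (fun θ : ℝ => 2 * |polygamma i θ| - |polygamma i (θ ^ 2)|) (Set.Ioo 0 1) ∧
    (2 * |polygamma i 1| - |polygamma i (1 ^ 2)| = |polygamma i 1| ∧ 0 < |polygamma i 1|) ∧
    Filter.Tendsto (fun θ : ℝ => 2 * |polygamma i θ| - |polygamma i (θ ^ 2)|)
      (nhdsWithin 0 (Set.Ioi 0)) Filter.atBot ∧
    ∃! θ : ℝ, θ ∈ Set.Ioo (0 : ℝ) 1 ∧ 2 * |polygamma i θ| - |polygamma i (θ ^ 2)| = 0 := by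
  have hi1 : 1 ≤ i := hi
  set g : ℝ → ℝ := fun θ : ℝ => 2 * |polygamma i θ| - |polygamma i (θ ^ 2)| with hg_def
  set G : ℝ → ℝ := fun t : ℝ => (i.factorial : ℝ) * (2 * Pg (i + 1) t - Pg (i + 1) (t ^ 2))
    with hG_def
  have hfac : (0 : ℝ) < (i.factorial : ℝ) := by positivity
  have hgG : ∀ θ : ℝ, 0 < θ → g θ = G θ := by
    intro θ hθ
    have hθ2 : 0 < θ ^ 2 := by positivity
    simp only [hg_def, hG_def, abs_polygamma hi1 hθ, abs_polygamma hi1 hθ2]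
    ring
  -- monotonicity
  have hGd : ∀ θ : ℝ, 0 < θ → θ < 1 → 0 < 2 * (i.factorial : ℝ) * ((i : ℝ) + 1)
      * (θ * Pg (i + 2) (θ ^ 2) - Pg (i + 2) θ) := by
    intro θ h0 h1
    have := Pg_lt (k := i + 2) (by omega) h0 h1
    have hip : (0 : ℝ) < (i : ℝ) + 1 := by positivity
    have hd : 0 < θ * Pg (i + 2) (θ ^ 2) - Pg (i + 2) θ := sub_pos.2 this
    have hc : (0:ℝ) < 2 * (i.factorial : ℝ) * ((i : ℝ) + 1) := by positivity
    exact mul_pos hc hd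
  have hGmono : StrictMonoOn G (Ioo (0 : ℝ) 1) := by
    apply strictMonoOn_of_deriv_pos (convex_Ioo 0 1)
    · intro x hx
      exact (hasDerivAt_G i hi hx.1).continuousAt.continuousWithinAt
    · intro x hx
      rw [interior_Ioo] at hx
      rw [(hasDerivAt_G i hi hx.1).deriv]
      exact hGd x hx.1 hx.2
  have hmono : StrictMonoOn g (Ioo (0 : ℝ) 1) := by
    intro a ha b hb hab
    rw [hgG a ha.1, hgG b hb.1]
    exact hGmono ha hb hab
  have htB : Tendsto g (𝓝[>] (0:ℝ)) atBot := by
    have hbound : ∀ θ : ℝ, θ ∈ Ioo (0:ℝ) 1 →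
        g θ ≤ (i.factorial : ℝ) * (2 * (θ ^ (i+1))⁻¹ + 4 - ((θ ^ (i+1))⁻¹) ^ 2) := by
      intro θ hθ
      obtain ⟨h0, h1⟩ := hθ
      have hθ2 : 0 < θ ^ 2 := by positivity
      have e1 : Pg (i+1) θ = (θ ^ (i+1))⁻¹ + ∑' n : ℕ, ((θ + (n + 1)) ^ (i+1))⁻¹ :=
        Pg_split (by omega) h0
      have e2 : Pg (i+1) (θ^2) = ((θ^2) ^ (i+1))⁻¹ + ∑' n : ℕ, ((θ^2 + (n + 1)) ^ (i+1))⁻¹ :=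
        Pg_split (by omega) hθ2
      have hS1 : ∑' n : ℕ, ((θ + (n + 1)) ^ (i+1))⁻¹ ≤ 2 := tail_le_two (by omega) h0
      have hS2 : (0:ℝ) ≤ ∑' n : ℕ, ((θ^2 + (n + 1)) ^ (i+1))⁻¹ :=
        tsum_nonneg (fun n => by positivity)
      have hsq : ((θ^2) ^ (i+1))⁻¹ = ((θ ^ (i+1))⁻¹) ^ 2 := by
        rw [← pow_mul, inv_pow, ← pow_mul, mul_comm 2 (i+1)]
      rw [hgG θ h0, hG_def]
      simp only
      rw [e1, e2, hsq]
      nlinarith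
    have htt : Tendsto (fun θ : ℝ => (θ ^ (i+1))⁻¹) (𝓝[>] (0:ℝ)) atTop := by
      apply tendsto_inv_nhdsGT_zero.comp
      rw [tendsto_nhdsWithin_iff]
      constructor
      · exact ((continuous_pow (i+1)).tendsto' 0 0 (by simp)).mono_left nhdsWithin_le_nhds
      · filter_upwards [self_mem_nhdsWithin] with θ hθ
        rw [mem_Ioi] at hθ ⊢
        positivity
    have hpoly : Tendsto (fun t : ℝ => (i.factorial : ℝ) * (2 * t + 4 - t ^ 2)) atTop atBot := by
      apply Tendsto.const_mul_atBot hfac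
      apply tendsto_atBot_mono' atTop (f₁ := fun t : ℝ => 4 - t)
      · filter_upwards [eventually_ge_atTop (3:ℝ)] with t ht
        nlinarith
      · apply tendsto_atBot_add_const_left
        exact tendsto_neg_atTop_atBot
    apply tendsto_atBot_mono' (𝓝[>] (0:ℝ))
      (f₁ := fun θ : ℝ => (i.factorial : ℝ) * (2 * (θ ^ (i+1))⁻¹ + 4 - ((θ ^ (i+1))⁻¹) ^ 2))
    · filter_upwards [Ioo_mem_nhdsGT_of_mem (show (0:ℝ) ∈ Ico (0:ℝ) 1 by norm_num)] with θ hθ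
      exact hbound θ hθ
    · exact hpoly.comp htt
  refine ⟨hmono, ⟨by rw [one_pow]; ring, ?_⟩, htB, ?_⟩
  · rw [abs_polygamma hi1 one_pos]
    have := Pg_pos (k := i + 1) (by omega) one_pos
    positivity
  · show ∃! θ : ℝ, θ ∈ Ioo (0:ℝ) 1 ∧ g θ = 0
    have hev0 : ∀ᶠ θ in 𝓝[>] (0:ℝ), g θ < 0 := htB.eventually (eventually_lt_atBot 0)
    have hevI : Ioo (0:ℝ) 1 ∈ 𝓝[>] (0:ℝ) :=
      Ioo_mem_nhdsGT_of_mem (by norm_num : (0:ℝ) ∈ Ico (0:ℝ) 1)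
    obtain ⟨a, hga, haI⟩ := (hev0.and hevI).exists
    have hG1 : 0 < G 1 := by
      have h2 : ((1:ℝ)^2) = 1 := by norm_num
      have hp := Pg_pos (k := i+1) (by omega) one_pos
      simp only [hG_def, h2]
      nlinarith
    have hGc : ContinuousAt G 1 := (hasDerivAt_G i hi one_pos).continuousAt
    have hev1 : ∀ᶠ θ in 𝓝[<] (1:ℝ), 0 < G θ :=
      (hGc.eventually (eventually_gt_nhds hG1)).filter_mono nhdsWithin_le_nhds
    have hevB : Ioo a 1 ∈ 𝓝[<] (1:ℝ) := Ioo_mem_nhdsLT haI.2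
    obtain ⟨b, hGb, hbI⟩ := (hev1.and (Filter.eventually_mem_set.mpr hevB)).exists
    have hbI' : b ∈ Ioo (0:ℝ) 1 := ⟨lt_trans haI.1 hbI.1, hbI.2⟩
    have hgb : 0 < g b := by rw [hgG b hbI'.1]; exact hGb
    have hab : a < b := hbI.1
    have hcont : ContinuousOn g (Icc a b) := by
      have hcG : ContinuousOn G (Icc a b) := fun x hx =>
        (hasDerivAt_G i hi (lt_of_lt_of_le haI.1 hx.1)).continuousAt.continuousWithinAt
      exact hcG.congr (fun x hx => hgG x (lt_of_lt_of_le haI.1 hx.1))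
    have h0mem : (0:ℝ) ∈ Ioo (g a) (g b) := ⟨hga, hgb⟩
    obtain ⟨θ₀, hθ₀, hgθ₀⟩ := intermediate_value_Ioo hab.le hcont h0mem
    have hθ₀I : θ₀ ∈ Ioo (0:ℝ) 1 := ⟨lt_trans haI.1 hθ₀.1, lt_trans hθ₀.2 hbI'.2⟩
    refine ⟨θ₀, ⟨hθ₀I, hgθ₀⟩, ?_⟩
    rintro y ⟨hyI, hy0⟩
    exact hmono.injOn hyI hθ₀I (by rw [hy0, hgθ₀])
end
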